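/- Fix C ∈ ℝ and let I be an interval on which cos((t + C)/2) ≠ 0. Then the functions ξ(t) = tan((t + C)/2) and η(t) = 1/(2·cos²((t + C)/2)) satisfy ξ'(t) = η(t) and η'(t) = ξ(t)·(3η(t) − ξ(t)² − 1) for all t ∈ I; moreover their conserved quantity κ = (ξ² + 1 − 2η)/(ξ² + 1 − η)² vanishes identically on I. -/

import Mathlib

/-- On any interval where `cos((t + C)/2) ≠ 0`, the functions `ξ(t) = tan((t + C)/2)` and
`η(t) = 1/(2 cos²((t + C)/2))` solve `ξ' = η`, `η' = ξ(3η - ξ² - 1)`, and the conserved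
quantity `κ = (ξ² + 1 - 2η)/(ξ² + 1 - η)²` vanishes identically. -/
theorem stmt_13 (C : ℝ) (I : Set ℝ)
    (hI : ∀ t ∈ I, Real.cos ((t + C) / 2) ≠ 0) :
    ∀ t ∈ I,
      HasDerivAt (fun s => Real.tan ((s + C) / 2))
        (1 / (2 * Real.cos ((t + C) / 2) ^ 2)) t ∧
      HasDerivAt (fun s => 1 / (2 * Real.cos ((s + C) / 2) ^ 2))
        (Real.tan ((t + C) / 2) *
          (3 * (1 / (2 * Real.cos ((t + C) / 2) ^ 2)) -
            Real.tan ((t + C) / 2) ^ 2 - 1)) t ∧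
      (Real.tan ((t + C) / 2) ^ 2 + 1 - 2 * (1 / (2 * Real.cos ((t + C) / 2) ^ 2))) /
          (Real.tan ((t + C) / 2) ^ 2 + 1 - 1 / (2 * Real.cos ((t + C) / 2) ^ 2)) ^ 2
        = 0 := by
  intro t ht
  have hc := hI t ht
  set c := Real.cos ((t + C) / 2) with hcdef
  have hu : HasDerivAt (fun s : ℝ => (s + C) / 2) (1 / 2) t := by
    simpa using ((hasDerivAt_id t).add_const C).div_const 2
  have htan : HasDerivAt (fun s => Real.tan ((s + C) / 2))
      (1 / c ^ 2 * (1 / 2)) t := (Real.hasDerivAt_tan (x := (t + C) / 2) hc).comp (h₂ := Real.tan) t hu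
  have hcos : HasDerivAt (fun s => Real.cos ((s + C) / 2))
      (-Real.sin ((t + C) / 2) * (1 / 2)) t :=
    (Real.hasDerivAt_cos _).comp t hu
  have hf : HasDerivAt (fun s => 2 * Real.cos ((s + C) / 2) ^ 2)
      (2 * ((2 : ℕ) * c ^ 1 * (-Real.sin ((t + C) / 2) * (1 / 2)))) t :=
    (hcos.pow 2).const_mul 2
  have hf0 : 2 * c ^ 2 ≠ 0 := by positivity
  have hinv : HasDerivAt (fun s => (2 * Real.cos ((s + C) / 2) ^ 2)⁻¹) _ t := hf.inv hf0
  have htansc : Real.tan ((t + C) / 2) = Real.sin ((t + C) / 2) / c :=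
    Real.tan_eq_sin_div_cos _
  have hpyth : Real.sin ((t + C) / 2) ^ 2 + c ^ 2 = 1 := Real.sin_sq_add_cos_sq _
  refine ⟨?_, ?_, ?_⟩
  · convert htan using 1; ring
  · simp only [one_div]
    convert hinv using 1
    rw [htansc, ← hcdef]
    field_simp
    linear_combination (-4 * Real.sin ((t + C) / 2)) * hpyth
  · have hnum : Real.tan ((t + C) / 2) ^ 2 + 1 - 2 * (1 / (2 * c ^ 2)) = 0 := by
      rw [htansc]
      field_simp
      linear_combination hpyth
    rw [hnum, zero_div]
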